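/- Let $P_X$ be a probability mass function on $\{1,\ldots,n\}$ with $P_X(1)\ge P_X(2)\ge\cdots\ge P_X(n)>0$, and let $m\in\{2,\ldots,n-1\}$. Define the random variable $\widetilde{X}_m$ on $\{1,\ldots,m\}$ as follows: if $P_X(1)<\frac1m$, then $\widetilde{X}_m$ is equiprobable on $\{1,\ldots,m\}$; otherwise, $P_{\widetilde{X}_m}(i)=P_X(i)$ for $i\in\{1,\ldots,n^*\}$ and $P_{\widetilde{X}_m}(i)=\frac{1}{m-n^*}\sum_{j=n^*+1}^{n}P_X(j)$ for $i\in\{n^*+1,\ldots,m\}$, where $n^*$ is the maximal integer $i\in\{1,\ldots,m-1\}$ such that $P_X(i)\ge\frac{1}{m-i}\sum_{j=i+1}^{n}P_X(j)$. Then, for every $\alpha>0$ and every deterministic function $f\colon\{1,\ldots,n\}\to\{1,\ldots,m\}$, the Rényi entropy satisfies $H_\alpha(f(X))\;\le\;H_\alpha(\widetilde{X}_m)$, where $X$ has pmf $P_X$. -/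

import Mathlib

open scoped BigOperators

open Finset

lemma sum_Icc_eq_sum_fin (M : ℕ) (h : ℕ → ℝ) :
    ∑ i ∈ Icc 1 M, h i = ∑ k : Fin M, h (k.val + 1) := by
  induction M with
  | zero => simp
  | succ M ih =>
    rw [Finset.sum_Icc_succ_top (by omega : 1 ≤ M + 1), ih, Fin.sum_univ_castSucc]
    simp

lemma icc_split (g : ℕ → ℝ) (a b : ℕ) (hab : a ≤ b) :
    ∑ i ∈ Icc 1 a, g i + ∑ i ∈ Icc (a + 1) b, g i = ∑ i ∈ Icc 1 b, g i := by
  rw [show (1:ℕ) = 0 + 1 from rfl, Finset.Icc_add_one_left_eq_Ioc, zero_add, Finset.Icc_add_one_left_eq_Ioc]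
  exact Finset.sum_Ioc_consecutive g (Nat.zero_le a) hab

lemma abel_nonneg (a S : ℕ → ℝ) : ∀ M : ℕ,
    (∀ i, 1 ≤ i → i < M → a (i + 1) ≤ a i) →
    (∀ k, k ≤ M → 0 ≤ S k) → S 0 = 0 →
    a M * S M ≤ ∑ i ∈ Icc 1 M, a i * (S i - S (i - 1)) := by
  intro M
  induction M with
  | zero => intro _ _ h0; simp [h0]
  | succ M ih =>
    intro ha hS h0
    rw [Finset.sum_Icc_succ_top (by omega : 1 ≤ M + 1)]
    rcases Nat.eq_zero_or_pos M with hM | hM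
    · subst hM; simp [h0]
    · have h1 := ih (fun i hi hi' => ha i hi (by omega)) (fun k hk => hS k (by omega)) h0
      have h2 : a (M + 1) ≤ a M := ha M hM (by omega)
      have h3 : 0 ≤ S M := hS M (by omega)
      have h4 : a (M + 1) * S M ≤ a M * S M := mul_le_mul_of_nonneg_right h2 h3
      simp only [Nat.add_sub_cancel]
      nlinarith

lemma core_maj (m : ℕ) (q r a : ℕ → ℝ)
    (hmaj : ∀ k, k ≤ m → ∑ i ∈ Icc 1 k, q i ≤ ∑ i ∈ Icc 1 k, r i)
    (heq : ∑ i ∈ Icc 1 m, r i = ∑ i ∈ Icc 1 m, q i)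
    (ha : ∀ i, 1 ≤ i → i < m → a (i + 1) ≤ a i) :
    0 ≤ ∑ i ∈ Icc 1 m, a i * (r i - q i) := by
  set S : ℕ → ℝ := fun k => ∑ i ∈ Icc 1 k, (r i - q i) with hSdef
  have hkey : ∀ i, 1 ≤ i → r i - q i = S i - S (i - 1) := by
    intro i hi
    have : S i = S (i - 1) + (r i - q i) := by
      simp only [hSdef]
      rw [show i = (i - 1) + 1 by omega] 
      rw [Finset.sum_Icc_succ_top (by omega : 1 ≤ (i-1) + 1)]
      simp
    linarith
  have hrw : ∑ i ∈ Icc 1 m, a i * (r i - q i) = ∑ i ∈ Icc 1 m, a i * (S i - S (i - 1)) := by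
    refine Finset.sum_congr rfl fun i hi => ?_
    rw [hkey i (Finset.mem_Icc.mp hi).1]
  rw [hrw]
  have hSm : S m = 0 := by
    simp only [hSdef, Finset.sum_sub_distrib]
    linarith
  have hS0 : S 0 = 0 := by simp [hSdef]
  have hSnn : ∀ k, k ≤ m → 0 ≤ S k := by
    intro k hk
    simp only [hSdef, Finset.sum_sub_distrib]
    have := hmaj k hk
    linarith
  have := abel_nonneg a S m ha hSnn hS0
  rw [hSm] at this
  linarith [this]


lemma fin_emb_bound {c m : ℕ} (e : Fin c ↪o Fin m) (j : Fin c) :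
    (e j).val ≤ m - c + j.val := by
  have key : ∀ d : ℕ, ∀ a b : Fin c, a.val + d = b.val → (e a).val + d ≤ (e b).val := by
    intro d
    induction d with
    | zero =>
      intro a b h
      have : a = b := Fin.ext (by omega)
      subst this; simp
    | succ d ih =>
      intro a b h
      have hb : a.val + d < c := by omega
      have h1 := ih a ⟨a.val + d, hb⟩ rfl
      have h2 : e ⟨a.val + d, hb⟩ < e b := e.strictMono (by rw [Fin.lt_def]; simp; omega)
      have h3 := Fin.lt_def.mp h2
      omega
  have hc : 0 < c := j.pos
  have hkey := key (c - 1 - j.val) j ⟨c - 1, by omega⟩ (by simp; omega)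
  have h2 : (e ⟨c - 1, by omega⟩).val < m := (e ⟨c - 1, by omega⟩).2
  omega

lemma exists_sorted (m : ℕ) (R : ℕ → ℝ) (hm : 1 ≤ m) :
    ∃ r : ℕ → ℝ,
      (∀ i j, 1 ≤ i → i ≤ j → j ≤ m → r j ≤ r i) ∧
      (∀ i, 1 ≤ i → i ≤ m → ∃ j, 1 ≤ j ∧ j ≤ m ∧ r i = R j) ∧
      (∀ G : ℝ → ℝ, ∑ i ∈ Icc 1 m, G (r i) = ∑ j ∈ Icc 1 m, G (R j)) ∧
      (∀ s : Finset ℕ, s ⊆ Icc 1 m → (∀ j ∈ Icc 1 m, 0 ≤ R j) →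
        ∑ j ∈ s, R j ≤ ∑ i ∈ Icc 1 s.card, r i) := by
  classical
  set F : Fin m → ℝ := fun k => R (k.val + 1) with hF
  set σ := Tuple.sort F with hσ
  have hmono : Monotone (F ∘ σ) := Tuple.monotone_sort F
  set g : Fin m → ℝ := F ∘ σ with hg
  set r : ℕ → ℝ := fun i => if h : m - i < m then g ⟨m - i, h⟩ else 0 with hr
  have hval : ∀ (i : ℕ) (hi : 1 ≤ i), r i = g ⟨m - i, by omega⟩ := by
    intro i hi
    rw [hr]
    simp only [dif_pos (show m - i < m by omega)]
  refine ⟨r, ?_, ?_, ?_, ?_⟩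
  · intro i j h1 h2 h3
    rw [hval i h1, hval j (by omega)]
    exact hmono (by rw [Fin.le_def]; simp; omega)
  · intro i h1 h2
    refine ⟨(σ ⟨m - i, by omega⟩).val + 1, by omega, by have := (σ ⟨m - i, by omega⟩).2; omega, ?_⟩
    rw [hval i h1]
    rfl
  · intro G
    rw [sum_Icc_eq_sum_fin m (fun i => G (r i)), sum_Icc_eq_sum_fin m (fun i => G (R i))]
    have h1 : ∀ k : Fin m, r (k.val + 1) = g k.rev := by
      intro k
      rw [hval (k.val + 1) (by omega)]
      congr 1
    rw [Finset.sum_congr rfl (fun (k : Fin m) _ => by rw [h1 k] : ∀ k ∈ Finset.univ, G (r (k.val + 1)) = G (g k.rev))]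
    rw [show (fun k : Fin m => G (g k.rev)) = (fun k : Fin m => G (g (Fin.revPerm k))) from rfl]
    rw [Equiv.sum_comp Fin.revPerm (fun k => G (g k))]
    rw [show (fun k : Fin m => G (g k)) = (fun k : Fin m => G (F (σ k))) from rfl]
    rw [Equiv.sum_comp σ (fun k => G (F k))]
  · intro s hs hnn
    set c := s.card with hc
    have hsub : ∀ j ∈ s, 1 ≤ j ∧ j ≤ m := fun j hj => Finset.mem_Icc.mp (hs hj)
    have hcm : c ≤ m := by
      have := Finset.card_le_card hs
      simpa [Nat.card_Icc] using this
    set ι : ℕ → Fin m := fun j => if h : j - 1 < m then ⟨j - 1, h⟩ else ⟨0, by omega⟩ with hι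
    have hιinj : ∀ j ∈ s, ∀ j' ∈ s, ι j = ι j' → j = j' := by
      intro j hj j' hj' h
      obtain ⟨h1, h2⟩ := hsub j hj; obtain ⟨h1', h2'⟩ := hsub j' hj'
      rw [hι] at h
      simp only [dif_pos (show j - 1 < m by omega), dif_pos (show j' - 1 < m by omega),
        Fin.mk.injEq] at h
      omega
    set t : Finset (Fin m) := s.image ι with ht
    have hcard : t.card = c := by rw [ht, Finset.card_image_of_injOn hιinj]
    have hts : ∑ j ∈ s, R j = ∑ k ∈ t, F k := by
      rw [ht, Finset.sum_image hιinj]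
      refine Finset.sum_congr rfl fun j hj => ?_
      obtain ⟨h1, h2⟩ := hsub j hj
      rw [hF, hι]
      simp only [dif_pos (show j - 1 < m by omega)]
      congr 1
      omega
    set t₂ : Finset (Fin m) := t.image σ.symm with ht₂
    have hcard₂ : t₂.card = c := by
      rw [ht₂, Finset.card_image_of_injective _ σ.symm.injective, hcard]
    have htt₂ : ∑ k ∈ t, F k = ∑ k ∈ t₂, g k := by
      rw [ht₂, Finset.sum_image (fun a _ b _ h => σ.symm.injective h)]
      refine Finset.sum_congr rfl fun k _ => ?_
      rw [hg]
      simp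
    set e := t₂.orderEmbOfFin hcard₂ with he
    have himg : t₂ = Finset.image (fun j : Fin c => e j) Finset.univ := by
      apply Finset.eq_of_subset_of_card_le
      · intro x hx
        have : x ∈ Set.range e := by rw [Finset.range_orderEmbOfFin]; exact hx
        obtain ⟨j, hj⟩ := this
        exact Finset.mem_image.mpr ⟨j, Finset.mem_univ j, hj⟩
      · rw [hcard₂, Finset.card_image_of_injective _ e.injective]
        simp
    have ht₂e : ∑ k ∈ t₂, g k = ∑ j : Fin c, g (e j) := by
      rw [himg, Finset.sum_image (fun a _ b _ h => e.injective h)]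
    have hbound : ∀ j : Fin c, g (e j) ≤ g ⟨m - c + j.val, by omega⟩ := by
      intro j
      exact hmono (by rw [Fin.le_def]; exact le_trans (fin_emb_bound e j) (by simp))
    have hfinal : ∑ j : Fin c, g ⟨m - c + j.val, by omega⟩ = ∑ i ∈ Icc 1 c, r i := by
      rw [sum_Icc_eq_sum_fin c r]
      rw [← Equiv.sum_comp (Fin.revPerm (n := c)) (fun j : Fin c => g ⟨m - c + j.val, by omega⟩)]
      refine Finset.sum_congr rfl fun j _ => ?_
      rw [hval (j.val + 1) (by omega)]
      congr 1
      rw [Fin.ext_iff]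
      simp [Fin.val_rev]
      omega
    calc ∑ j ∈ s, R j = ∑ j : Fin c, g (e j) := by rw [hts, htt₂, ht₂e]
      _ ≤ ∑ j : Fin c, g ⟨m - c + j.val, by omega⟩ := Finset.sum_le_sum fun j _ => hbound j
      _ = ∑ i ∈ Icc 1 c, r i := hfinal

lemma icc_split' (g : ℕ → ℝ) (a b : ℕ) (hab : a ≤ b) :
    ∑ i ∈ Icc 1 a, g i + ∑ i ∈ Icc (a + 1) b, g i = ∑ i ∈ Icc 1 b, g i := by
  rw [show (1:ℕ) = 0 + 1 from rfl, Finset.Icc_add_one_left_eq_Ioc, zero_add, Finset.Icc_add_one_left_eq_Ioc]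
  exact Finset.sum_Ioc_consecutive g (Nat.zero_le a) hab

lemma const_le_sum_icc (a b : ℕ) (r : ℕ → ℝ) (x : ℝ) (h : ∀ i ∈ Icc a b, x ≤ r i)
    (hab : a ≤ b) (ha : 1 ≤ a) :
    ((b : ℝ) + 1 - a) * x ≤ ∑ i ∈ Icc a b, r i := by
  have h1 : ∑ i ∈ Icc a b, x ≤ ∑ i ∈ Icc a b, r i := Finset.sum_le_sum h
  rw [Finset.sum_const, Nat.card_Icc, nsmul_eq_mul] at h1
  have : ((b + 1 - a : ℕ) : ℝ) = (b : ℝ) + 1 - a := by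
    have : a ≤ b + 1 := by omega
    push_cast [this]
    ring
  linarith [h1, this ▸ h1]

lemma sum_icc_le_const (a b : ℕ) (r : ℕ → ℝ) (x : ℝ) (h : ∀ i ∈ Icc a b, r i ≤ x)
    (hab : a ≤ b + 1) :
    ∑ i ∈ Icc a b, r i ≤ ((b : ℝ) + 1 - a) * x := by
  have h1 : ∑ i ∈ Icc a b, r i ≤ ∑ i ∈ Icc a b, x := Finset.sum_le_sum h
  rw [Finset.sum_const, Nat.card_Icc, nsmul_eq_mul] at h1
  have h2 : ((b + 1 - a : ℕ) : ℝ) = (b : ℝ) + 1 - a := by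
    push_cast [hab]
    ring
  rw [h2] at h1
  exact h1

lemma head_avg (m k : ℕ) (r : ℕ → ℝ)
    (hanti : ∀ i j, 1 ≤ i → i ≤ j → j ≤ m → r j ≤ r i) (hk : k ≤ m) :
    (k : ℝ) * ∑ i ∈ Icc 1 m, r i ≤ (m : ℝ) * ∑ i ∈ Icc 1 k, r i := by
  rcases Nat.eq_zero_or_pos k with h0 | h0
  · subst h0; simp
  have hsplit := icc_split' r k m hk
  have hb1 := const_le_sum_icc 1 k r (r k)
      (fun i hi => hanti i k (Finset.mem_Icc.mp hi).1 (Finset.mem_Icc.mp hi).2 hk) h0 le_rfl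
  have hb2 := sum_icc_le_const (k + 1) m r (r k)
      (fun i hi => hanti k i h0 (le_of_lt (Nat.lt_of_succ_le (Finset.mem_Icc.mp hi).1))
        (Finset.mem_Icc.mp hi).2) (by omega)
  have hcast : ((k : ℝ)) ≤ (m : ℝ) := by exact_mod_cast hk
  push_cast at hb1 hb2
  nlinarith [hb1, hb2, hsplit]

lemma tail_avg (m N k : ℕ) (r : ℕ → ℝ)
    (hanti : ∀ i j, 1 ≤ i → i ≤ j → j ≤ m → r j ≤ r i)
    (hN : 1 ≤ N) (hNk : N ≤ k) (hkm : k ≤ m) :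
    ((m : ℝ) - N) * ∑ i ∈ Icc (k + 1) m, r i ≤ ((m : ℝ) - k) * ∑ i ∈ Icc (N + 1) m, r i := by
  rcases Nat.eq_or_lt_of_le hNk with h | h
  · subst h; rfl
  -- N < k
  have hsplit : ∑ i ∈ Icc (N + 1) k, r i + ∑ i ∈ Icc (k + 1) m, r i
      = ∑ i ∈ Icc (N + 1) m, r i := by
    rw [Finset.Icc_add_one_left_eq_Ioc, Finset.Icc_add_one_left_eq_Ioc, Finset.Icc_add_one_left_eq_Ioc]
    exact Finset.sum_Ioc_consecutive r (by omega) hkm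
  have hb1 := const_le_sum_icc (N + 1) k r (r k)
      (fun i hi => hanti i k (le_trans (by omega) (Finset.mem_Icc.mp hi).1)
        (Finset.mem_Icc.mp hi).2 hkm) (by omega) (by omega)
  have hb2 := sum_icc_le_const (k + 1) m r (r k)
      (fun i hi => hanti k i (by omega) (le_of_lt (Nat.lt_of_succ_le (Finset.mem_Icc.mp hi).1))
        (Finset.mem_Icc.mp hi).2) (by omega)
  have hcast1 : ((N : ℝ)) ≤ (k : ℝ) := by exact_mod_cast hNk
  have hcast2 : ((k : ℝ)) ≤ (m : ℝ) := by exact_mod_cast hkm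
  push_cast at hb1 hb2
  nlinarith [hb1, hb2, hsplit]

lemma tangent_shannon {x y : ℝ} (hx : 0 < x) (hy : 0 ≤ y) :
    (Real.log x + 1) * (y - x) ≤ y * Real.log y - x * Real.log x := by
  rcases hy.eq_or_lt with h | hy'
  · rw [← h]
    simp [Real.log_zero]
    nlinarith [hx]
  · have h := Real.log_le_sub_one_of_pos (div_pos hx hy')
    rw [Real.log_div hx.ne' hy'.ne'] at h
    have h2 : y * (Real.log x - Real.log y) ≤ y * (x / y - 1) :=
      mul_le_mul_of_nonneg_left h hy'.le
    have h3 : y * (x / y - 1) = x - y := by field_simp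
    nlinarith [h2, h3]

lemma tangent_convex {x y α : ℝ} (hx : 0 < x) (hy : 0 ≤ y) (hα : 1 ≤ α) :
    x ^ α + α * x ^ (α - 1) * (y - x) ≤ y ^ α := by
  have hs : (-1 : ℝ) ≤ y / x - 1 := by
    have : 0 ≤ y / x := div_nonneg hy hx.le
    linarith
  have hb := one_add_mul_self_le_rpow_one_add hs hα
  have h4 : (1 + (y / x - 1)) = y / x := by ring
  rw [h4] at hb
  have h5 : (y / x) ^ α = y ^ α / x ^ α := Real.div_rpow hy hx.le α
  have h6 : (0:ℝ) < x ^ α := Real.rpow_pos_of_pos hx α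
  have h7 : x ^ (α - 1) = x ^ α / x := by rw [Real.rpow_sub hx, Real.rpow_one]
  have key : x ^ α * (1 + α * (y / x - 1)) ≤ y ^ α := by
    calc x ^ α * (1 + α * (y / x - 1)) ≤ x ^ α * ((y / x) ^ α) := by nlinarith [hb, h6]
      _ = y ^ α := by rw [h5]; field_simp
  have expand : x ^ α * (1 + α * (y / x - 1)) = x ^ α + α * (x ^ α / x) * (y - x) := by
    field_simp
  rw [h7]
  linarith [key, expand ▸ key]

lemma tangent_concave {x y α : ℝ} (hx : 0 < x) (hy : 0 ≤ y) (hα1 : 0 ≤ α) (hα2 : α ≤ 1) :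
    y ^ α ≤ x ^ α + α * x ^ (α - 1) * (y - x) := by
  have hs : (-1 : ℝ) ≤ y / x - 1 := by
    have : 0 ≤ y / x := div_nonneg hy hx.le
    linarith
  have hb := rpow_one_add_le_one_add_mul_self hs hα1 hα2
  have h4 : (1 + (y / x - 1)) = y / x := by ring
  rw [h4] at hb
  have h5 : (y / x) ^ α = y ^ α / x ^ α := Real.div_rpow hy hx.le α
  have h6 : (0:ℝ) < x ^ α := Real.rpow_pos_of_pos hx α
  have h7 : x ^ (α - 1) = x ^ α / x := by rw [Real.rpow_sub hx, Real.rpow_one]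
  have key : y ^ α ≤ x ^ α * (1 + α * (y / x - 1)) := by
    calc y ^ α = x ^ α * ((y / x) ^ α) := by rw [h5]; field_simp
      _ ≤ x ^ α * (1 + α * (y / x - 1)) := by nlinarith [hb, h6]
  have expand : x ^ α * (1 + α * (y / x - 1)) = x ^ α + α * (x ^ α / x) * (y - x) := by
    field_simp
  rw [h7]
  linarith [key, expand ▸ key]



/-- The Rényi entropy of order `α > 0` of a pmf `p` supported on the finite index set
`s`, with the Shannon entropy as its continuous extension at `α = 1`. -/
noncomputable def renyiEntropy {ι : Type*} (α : ℝ) (s : Finset ι) (p : ι → ℝ) : ℝ :=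
  if α = 1 then ∑ i ∈ s, -(p i * Real.log (p i))
  else (1 - α)⁻¹ * Real.log (∑ i ∈ s, p i ^ α)

lemma final_step (m : ℕ) (hm : 1 ≤ m) (α : ℝ) (hα : 0 < α) (R q r : ℕ → ℝ)
    (hG : ∀ G : ℝ → ℝ, ∑ i ∈ Icc 1 m, G (r i) = ∑ j ∈ Icc 1 m, G (R j))
    (hr_nn : ∀ i, 1 ≤ i → i ≤ m → 0 ≤ r i)
    (hq_anti : ∀ i j, 1 ≤ i → i ≤ j → j ≤ m → q j ≤ q i)
    (hq_pos : ∀ i, 1 ≤ i → i ≤ m → 0 < q i)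
    (hsum : ∑ i ∈ Icc 1 m, r i = ∑ i ∈ Icc 1 m, q i)
    (hmaj : ∀ k, k ≤ m → ∑ i ∈ Icc 1 k, q i ≤ ∑ i ∈ Icc 1 k, r i) :
    renyiEntropy α (Icc 1 m) R ≤ renyiEntropy α (Icc 1 m) q := by
  have hne : (Icc 1 m).Nonempty := ⟨1, Finset.mem_Icc.mpr ⟨le_rfl, hm⟩⟩
  have hmem : ∀ i ∈ Icc 1 m, 1 ≤ i ∧ i ≤ m := fun i hi => Finset.mem_Icc.mp hi
  rw [renyiEntropy, renyiEntropy]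
  by_cases hα1 : α = 1
  · simp only [if_pos hα1]
    have hL : ∑ j ∈ Icc 1 m, -(R j * Real.log (R j))
        = ∑ i ∈ Icc 1 m, -(r i * Real.log (r i)) :=
      (hG (fun t => -(t * Real.log t))).symm
    rw [hL]
    have ha : ∀ i, 1 ≤ i → i < m → Real.log (q (i + 1)) + 1 ≤ Real.log (q i) + 1 := by
      intro i h1 h2
      have := Real.log_le_log (hq_pos (i + 1) (by omega) (by omega))
        (hq_anti i (i + 1) h1 (by omega) (by omega))
      linarith
    have hcore := core_maj m q r (fun i => Real.log (q i) + 1) hmaj hsum ha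
    have hterm : ∀ i ∈ Icc 1 m,
        (Real.log (q i) + 1) * (r i - q i) ≤ r i * Real.log (r i) - q i * Real.log (q i) :=
      fun i hi => tangent_shannon (hq_pos i (hmem i hi).1 (hmem i hi).2)
        (hr_nn i (hmem i hi).1 (hmem i hi).2)
    have hsum2 := Finset.sum_le_sum hterm
    rw [Finset.sum_sub_distrib] at hsum2
    have h3 : ∑ i ∈ Icc 1 m, q i * Real.log (q i) ≤ ∑ i ∈ Icc 1 m, r i * Real.log (r i) := by
      linarith
    simp only [Finset.sum_neg_distrib]
    linarith
  · simp only [if_neg hα1]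
    have hRr : ∑ j ∈ Icc 1 m, R j ^ α = ∑ i ∈ Icc 1 m, r i ^ α := (hG (fun t => t ^ α)).symm
    rw [hRr]
    have hqpos' : 0 < ∑ i ∈ Icc 1 m, q i ^ α :=
      Finset.sum_pos (fun i hi => Real.rpow_pos_of_pos (hq_pos i (hmem i hi).1 (hmem i hi).2) α) hne
    have hrpos' : 0 < ∑ i ∈ Icc 1 m, r i ^ α := by
      have hsq : 0 < ∑ i ∈ Icc 1 m, q i :=
        Finset.sum_pos (fun i hi => hq_pos i (hmem i hi).1 (hmem i hi).2) hne
      have hsr : 0 < ∑ i ∈ Icc 1 m, r i := by rw [hsum]; exact hsq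
      have hex : ∃ i ∈ Icc 1 m, 0 < r i := by
        by_contra hcon
        push_neg at hcon
        have : ∑ i ∈ Icc 1 m, r i ≤ 0 := Finset.sum_nonpos hcon
        linarith
      obtain ⟨i, hi, hri⟩ := hex
      exact Finset.sum_pos' (fun j hj => Real.rpow_nonneg (hr_nn j (hmem j hj).1 (hmem j hj).2) α)
        ⟨i, hi, Real.rpow_pos_of_pos hri α⟩
    rcases lt_or_gt_of_ne hα1 with hlt | hgt
    · -- α < 1
      have ha : ∀ i, 1 ≤ i → i < m →
          -(α * q (i + 1) ^ (α - 1)) ≤ -(α * q i ^ (α - 1)) := by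
        intro i h1 h2
        have := Real.rpow_le_rpow_of_nonpos (hq_pos (i + 1) (by omega) (by omega))
          (hq_anti i (i + 1) h1 (by omega) (by omega)) (by linarith : α - 1 ≤ 0)
        nlinarith [hα.le]
      have hcore := core_maj m q r (fun i => -(α * q i ^ (α - 1))) hmaj hsum ha
      have hterm : ∀ i ∈ Icc 1 m,
          -(α * q i ^ (α - 1)) * (r i - q i) ≤ q i ^ α - r i ^ α := by
        intro i hi
        have := tangent_concave (hq_pos i (hmem i hi).1 (hmem i hi).2)
          (hr_nn i (hmem i hi).1 (hmem i hi).2) hα.le hlt.le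
        linarith
      have hsum2 := Finset.sum_le_sum hterm
      rw [Finset.sum_sub_distrib] at hsum2
      have h3 : ∑ i ∈ Icc 1 m, r i ^ α ≤ ∑ i ∈ Icc 1 m, q i ^ α := by linarith
      have hlog := Real.log_le_log hrpos' h3
      have hpos : (0:ℝ) ≤ (1 - α)⁻¹ := by
        apply inv_nonneg.mpr; linarith
      exact mul_le_mul_of_nonneg_left hlog hpos
    · -- α > 1
      have ha : ∀ i, 1 ≤ i → i < m →
          α * q (i + 1) ^ (α - 1) ≤ α * q i ^ (α - 1) := by
        intro i h1 h2
        have := Real.rpow_le_rpow (hq_pos (i + 1) (by omega) (by omega)).le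
          (hq_anti i (i + 1) h1 (by omega) (by omega)) (by linarith : (0:ℝ) ≤ α - 1)
        nlinarith [hα.le]
      have hcore := core_maj m q r (fun i => α * q i ^ (α - 1)) hmaj hsum ha
      have hterm : ∀ i ∈ Icc 1 m,
          α * q i ^ (α - 1) * (r i - q i) ≤ r i ^ α - q i ^ α := by
        intro i hi
        have := tangent_convex (hq_pos i (hmem i hi).1 (hmem i hi).2)
          (hr_nn i (hmem i hi).1 (hmem i hi).2) hgt.le
        linarith
      have hsum2 := Finset.sum_le_sum hterm
      rw [Finset.sum_sub_distrib] at hsum2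
      have h3 : ∑ i ∈ Icc 1 m, q i ^ α ≤ ∑ i ∈ Icc 1 m, r i ^ α := by linarith
      have hlog := Real.log_le_log hqpos' h3
      have hneg : (1 - α)⁻¹ ≤ 0 := by
        apply inv_nonpos.mpr; linarith
      exact mul_le_mul_of_nonpos_left hlog hneg

/-- **Tight upper bound on the Rényi entropy of a function of a discrete random
variable.**  Let `P` be a pmf on `{1,…,n}` with `P 1 ≥ ⋯ ≥ P n > 0` and let
`m ∈ {2,…,n-1}`.  Define the pmf `Q` of `X̃_m` on `{1,…,m}`: if `P 1 < 1/m` then `Q` is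
uniform; otherwise `Q i = P i` for `i ≤ n*` and `Q i = (∑_{j=n*+1}^n P j)/(m-n*)` for
`n* < i ≤ m`, where `n*` is the maximal `i ∈ {1,…,m-1}` with
`P i ≥ (∑_{j=i+1}^n P j)/(m-i)`.  Then for every `α > 0` and every deterministic
`f : {1,…,n} → {1,…,m}`, `H_α(f(X)) ≤ H_α(X̃_m)`. -/
theorem renyi_entropy_function_upper_bound
    (n m : ℕ) (hm2 : 2 ≤ m) (hmn : m + 1 ≤ n)
    (P : ℕ → ℝ) (hPpos : ∀ i ∈ Finset.Icc 1 n, 0 < P i)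
    (hPanti : ∀ i j, 1 ≤ i → i ≤ j → j ≤ n → P j ≤ P i)
    (hPsum : ∑ i ∈ Finset.Icc 1 n, P i = 1)
    (nstar : ℕ)
    (hnstar : 1 / (m : ℝ) ≤ P 1 →
      nstar ∈ Finset.Icc 1 (m - 1) ∧
      (∑ j ∈ Finset.Icc (nstar + 1) n, P j) / ((m : ℝ) - nstar) ≤ P nstar ∧
      ∀ i ∈ Finset.Icc 1 (m - 1),
        (∑ j ∈ Finset.Icc (i + 1) n, P j) / ((m : ℝ) - i) ≤ P i → i ≤ nstar)
    (Q : ℕ → ℝ)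
    (hQunif : P 1 < 1 / (m : ℝ) → ∀ i ∈ Finset.Icc 1 m, Q i = 1 / (m : ℝ))
    (hQ : 1 / (m : ℝ) ≤ P 1 → ∀ i ∈ Finset.Icc 1 m,
      Q i = if i ≤ nstar then P i
            else (∑ j ∈ Finset.Icc (nstar + 1) n, P j) / ((m : ℝ) - nstar))
    (α : ℝ) (hα : 0 < α)
    (f : ℕ → ℕ) (hf : ∀ i ∈ Finset.Icc 1 n, f i ∈ Finset.Icc 1 m) :
    renyiEntropy α (Finset.Icc 1 m)
        (fun j => ∑ i ∈ (Finset.Icc 1 n).filter (fun i => f i = j), P i)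
      ≤ renyiEntropy α (Finset.Icc 1 m) Q := by
  classical
  set R : ℕ → ℝ := fun j => ∑ i ∈ (Finset.Icc 1 n).filter (fun i => f i = j), P i with hR
  have hm1 : 1 ≤ m := by omega
  have hPnn : ∀ i ∈ Icc 1 n, 0 ≤ P i := fun i hi => (hPpos i hi).le
  have hRnn : ∀ j, 0 ≤ R j := by
    intro j; rw [hR]
    exact Finset.sum_nonneg fun i hi => hPnn i (Finset.mem_of_mem_filter i hi)
  have hRsum : ∑ j ∈ Icc 1 m, R j = 1 := by
    rw [hR]
    exact (Finset.sum_fiberwise_of_maps_to hf P).trans hPsum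
  obtain ⟨r, hr_anti, hr_val, hr_G, hr_top⟩ := exists_sorted m R hm1
  have hr_nn : ∀ i, 1 ≤ i → i ≤ m → 0 ≤ r i := by
    intro i h1 h2
    obtain ⟨j, _, _, hj⟩ := hr_val i h1 h2
    rw [hj]; exact hRnn j
  have hrsum : ∑ i ∈ Icc 1 m, r i = 1 := by
    have := hr_G (fun t => t)
    simpa using this.trans hRsum
  have hmR : (0:ℝ) < m := by positivity
  by_cases hcase : P 1 < 1 / (m : ℝ)
  · -- uniform case
    have hQv := hQunif hcase
    have hq_anti : ∀ i j, 1 ≤ i → i ≤ j → j ≤ m → Q j ≤ Q i := by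
      intro i j h1 h2 h3
      rw [hQv i (Finset.mem_Icc.mpr ⟨h1, by omega⟩), hQv j (Finset.mem_Icc.mpr ⟨by omega, h3⟩)]
    have hq_pos : ∀ i, 1 ≤ i → i ≤ m → 0 < Q i := by
      intro i h1 h2
      rw [hQv i (Finset.mem_Icc.mpr ⟨h1, h2⟩)]
      positivity
    have hq_sum : ∑ i ∈ Icc 1 m, Q i = 1 := by
      rw [Finset.sum_congr rfl (fun i hi => hQv i hi), Finset.sum_const, Nat.card_Icc,
        nsmul_eq_mul]
      have : ((m + 1 - 1 : ℕ) : ℝ) = (m : ℝ) := by norm_num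
      rw [this]
      field_simp
    have hmaj : ∀ k, k ≤ m → ∑ i ∈ Icc 1 k, Q i ≤ ∑ i ∈ Icc 1 k, r i := by
      intro k hk
      have hQk : ∑ i ∈ Icc 1 k, Q i = (k : ℝ) * (1 / m) := by
        rw [Finset.sum_congr rfl
          (fun i hi => hQv i (Finset.mem_Icc.mpr
            ⟨(Finset.mem_Icc.mp hi).1, le_trans (Finset.mem_Icc.mp hi).2 hk⟩)),
          Finset.sum_const, Nat.card_Icc, nsmul_eq_mul]
        norm_num
      have hha := head_avg m k r hr_anti hk
      rw [hrsum] at hha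
      rw [hQk, mul_one_div, div_le_iff₀ hmR]
      nlinarith [hha]
    exact final_step m hm1 α hα R Q r hr_G hr_nn hq_anti hq_pos
      (hrsum.trans hq_sum.symm) hmaj
  · -- non-uniform case
    have h1m : 1 / (m : ℝ) ≤ P 1 := not_lt.mp hcase
    obtain ⟨hNmem, hNgeq, _⟩ := hnstar h1m
    obtain ⟨hN1, hNm⟩ := Finset.mem_Icc.mp hNmem
    have hNltm : nstar < m := by omega
    have hNltn : nstar < n := by omega
    set T := ∑ j ∈ Icc (nstar + 1) n, P j with hT
    have hTpos : 0 < T := by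
      rw [hT]
      apply Finset.sum_pos
      · intro j hj
        obtain ⟨hj1, hj2⟩ := Finset.mem_Icc.mp hj
        exact hPpos j (Finset.mem_Icc.mpr ⟨by omega, hj2⟩)
      · exact ⟨nstar + 1, Finset.mem_Icc.mpr ⟨le_rfl, by omega⟩⟩
    have hmN : (0:ℝ) < (m:ℝ) - nstar := by
      have : (nstar : ℝ) < m := by exact_mod_cast hNltm
      linarith
    set c := T / ((m:ℝ) - nstar) with hc
    have hcpos : 0 < c := div_pos hTpos hmN
    have hcP : c ≤ P nstar := hNgeq
    have hQv := hQ h1m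
    have hq_pos : ∀ i, 1 ≤ i → i ≤ m → 0 < Q i := by
      intro i hi1 hi2
      rw [hQv i (Finset.mem_Icc.mpr ⟨hi1, hi2⟩)]
      split_ifs with h
      · exact hPpos i (Finset.mem_Icc.mpr ⟨hi1, by omega⟩)
      · exact hcpos
    have hq_anti : ∀ i j, 1 ≤ i → i ≤ j → j ≤ m → Q j ≤ Q i := by
      intro i j hi1 hij hjm
      rw [hQv i (Finset.mem_Icc.mpr ⟨hi1, by omega⟩), hQv j (Finset.mem_Icc.mpr ⟨by omega, hjm⟩)]
      split_ifs with hj hi hi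
      · exact hPanti i j hi1 hij (by omega)
      · omega
      · exact le_trans hcP (hPanti i nstar hi1 hi (by omega))
      · exact le_rfl
    have hsplitQN : ∀ k, nstar ≤ k → k ≤ m →
        ∑ i ∈ Icc 1 k, Q i = ∑ i ∈ Icc 1 nstar, P i + ((k:ℝ) - nstar) * c := by
      intro k hNk hkm
      rw [← icc_split Q nstar k hNk]
      have e1 : ∑ i ∈ Icc 1 nstar, Q i = ∑ i ∈ Icc 1 nstar, P i := by
        refine Finset.sum_congr rfl fun i hi => ?_
        obtain ⟨hi1, hi2⟩ := Finset.mem_Icc.mp hi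
        rw [hQv i (Finset.mem_Icc.mpr ⟨hi1, by omega⟩), if_pos hi2]
      have e2 : ∑ i ∈ Icc (nstar + 1) k, Q i = ((k:ℝ) - nstar) * c := by
        have e3 : ∀ i ∈ Icc (nstar + 1) k, Q i = c := by
          intro i hi
          obtain ⟨hi1, hi2⟩ := Finset.mem_Icc.mp hi
          rw [hQv i (Finset.mem_Icc.mpr ⟨by omega, by omega⟩), if_neg (by omega)]
        rw [Finset.sum_congr rfl e3, Finset.sum_const, Nat.card_Icc, nsmul_eq_mul]
        have hcst : ((k + 1 - (nstar + 1) : ℕ) : ℝ) = (k:ℝ) - nstar := by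
          rw [Nat.cast_sub (by omega : nstar + 1 ≤ k + 1)]
          push_cast
          ring
        rw [hcst]
      rw [e1, e2]
    have hPTsum : ∑ i ∈ Icc 1 nstar, P i + T = 1 := by
      rw [hT, icc_split P nstar n (by omega), hPsum]
    have hq_sum : ∑ i ∈ Icc 1 m, Q i = 1 := by
      rw [hsplitQN m hNltm.le le_rfl]
      have : ((m:ℝ) - nstar) * c = T := by
        rw [hc]
        field_simp
      rw [this]
      linarith [hPTsum]
    have hPk : ∀ k, k ≤ nstar → ∑ i ∈ Icc 1 k, P i ≤ ∑ i ∈ Icc 1 k, r i := by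
      intro k hk
      set s := (Icc 1 k).image f with hs
      have hsub : s ⊆ Icc 1 m := by
        intro j hj
        rw [hs] at hj
        obtain ⟨i, hi, hij⟩ := Finset.mem_image.mp hj
        obtain ⟨hi1, hi2⟩ := Finset.mem_Icc.mp hi
        rw [← hij]
        exact hf i (Finset.mem_Icc.mpr ⟨hi1, by omega⟩)
      have hcard : s.card ≤ k := le_trans Finset.card_image_le (by simp [Nat.card_Icc])
      have h1' : ∑ j ∈ s, R j = ∑ i ∈ (Icc 1 n).filter (fun i => f i ∈ s), P i := by
        rw [hR]
        exact Finset.sum_fiberwise_eq_sum_filter (Icc 1 n) s f P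
      have h2' : ∑ i ∈ Icc 1 k, P i ≤ ∑ i ∈ (Icc 1 n).filter (fun i => f i ∈ s), P i := by
        apply Finset.sum_le_sum_of_subset_of_nonneg
        · intro i hi
          obtain ⟨hi1, hi2⟩ := Finset.mem_Icc.mp hi
          refine Finset.mem_filter.mpr ⟨Finset.mem_Icc.mpr ⟨hi1, by omega⟩, ?_⟩
          rw [hs]
          exact Finset.mem_image_of_mem f hi
        · intro i hi _
          exact hPnn i (Finset.mem_of_mem_filter i hi)
      have h3' := hr_top s hsub (fun j _ => hRnn j)
      have h4' : ∑ i ∈ Icc 1 s.card, r i ≤ ∑ i ∈ Icc 1 k, r i := by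
        apply Finset.sum_le_sum_of_subset_of_nonneg
        · exact Finset.Icc_subset_Icc_right hcard
        · intro i hi _
          obtain ⟨hi1, hi2⟩ := Finset.mem_Icc.mp hi
          exact hr_nn i hi1 (by omega)
      linarith
    have hmaj : ∀ k, k ≤ m → ∑ i ∈ Icc 1 k, Q i ≤ ∑ i ∈ Icc 1 k, r i := by
      intro k hkm
      rcases le_or_gt k nstar with hkN | hkN
      · have : ∑ i ∈ Icc 1 k, Q i = ∑ i ∈ Icc 1 k, P i := by
          refine Finset.sum_congr rfl fun i hi => ?_
          obtain ⟨hi1, hi2⟩ := Finset.mem_Icc.mp hi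
          rw [hQv i (Finset.mem_Icc.mpr ⟨hi1, by omega⟩), if_pos (by omega)]
        rw [this]
        exact hPk k hkN
      · rw [hsplitQN k hkN.le hkm]
        have e2 := hPk nstar le_rfl
        have e3 : ∑ i ∈ Icc 1 k, r i + ∑ i ∈ Icc (k+1) m, r i = 1 := by
          rw [icc_split r k m hkm]; exact hrsum
        have e4 : ∑ i ∈ Icc 1 nstar, r i + ∑ i ∈ Icc (nstar+1) m, r i = 1 := by
          rw [icc_split r nstar m (by omega)]; exact hrsum
        have e5 := tail_avg m nstar k r hr_anti hN1 hkN.le hkm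
        have e6 : T = ((m:ℝ) - nstar) * c := by rw [hc]; field_simp
        have e7 : ∑ i ∈ Icc (nstar+1) m, r i ≤ T := by linarith
        have hkR : (k:ℝ) ≤ m := by exact_mod_cast hkm
        have hNkR : (nstar:ℝ) ≤ k := by exact_mod_cast hkN.le
        have e8 : ((m:ℝ) - nstar) * ∑ i ∈ Icc (k+1) m, r i
            ≤ ((m:ℝ) - k) * (((m:ℝ) - nstar) * c) := by
          calc ((m:ℝ) - nstar) * ∑ i ∈ Icc (k+1) m, r i
              ≤ ((m:ℝ) - k) * ∑ i ∈ Icc (nstar+1) m, r i := e5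
            _ ≤ ((m:ℝ) - k) * T := by
                apply mul_le_mul_of_nonneg_left e7 (by linarith)
            _ = ((m:ℝ) - k) * (((m:ℝ) - nstar) * c) := by rw [← e6]
        have e8' : ((m:ℝ) - nstar) * ∑ i ∈ Icc (k+1) m, r i
            ≤ ((m:ℝ) - nstar) * (((m:ℝ) - k) * c) := e8.trans_eq (by ring)
        have e9 : ∑ i ∈ Icc (k+1) m, r i ≤ ((m:ℝ) - k) * c :=
          le_of_mul_le_mul_left e8' hmN
        have hid : ((m:ℝ) - nstar) * c = ((m:ℝ) - k) * c + ((k:ℝ) - nstar) * c := by ring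
        linarith [e9, e3, hPTsum, e6, hid]
    exact final_step m hm1 α hα R Q r hr_G hr_nn hq_anti hq_pos
      (hrsum.trans hq_sum.symm) hmaj
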